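/- Let a, b, c, d, e, f : ℝ² → ℝ and let u, u₁, u₂, u₃ : ℝ² → ℝ be differentiable functions each satisfying the system of partial differential equations ∂v/∂x = a(x,y)v² + b(x,y)v + c(x,y) and ∂v/∂y = d(x,y)v² + e(x,y)v + f(x,y) at every point of ℝ². Assume (u − u₂)(u₁ − u₃) vanishes nowhere on ℝ². Then the cross-ratio (x,y) ↦ (u(x,y) − u₁(x,y))(u₂(x,y) − u₃(x,y)) / ((u(x,y) − u₂(x,y))(u₁(x,y) − u₃(x,y))) is constant on ℝ². (This is the superposition rule, in terms of three independent solutions, for the Riccati-type system of PDEs, exactly as for the Riccati ODE.) -/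

import Mathlib

lemma aux_mul_sub_fderiv (f g h k : ℝ × ℝ → ℝ) (hf : Differentiable ℝ f)
    (hg : Differentiable ℝ g) (hh : Differentiable ℝ h) (hk : Differentiable ℝ k)
    (p w : ℝ × ℝ) :
    fderiv ℝ (fun q => (f q - g q) * (h q - k q)) p w
      = (f p - g p) * (fderiv ℝ h p w - fderiv ℝ k p w)
        + (h p - k p) * (fderiv ℝ f p w - fderiv ℝ g p w) := by
  rw [fderiv_fun_mul (c := fun q => f q - g q) (d := fun q => h q - k q) ((hf p).sub (hg p)) ((hh p).sub (hk p)),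
    fderiv_fun_sub (hf p) (hg p), fderiv_fun_sub (hh p) (hk p)]
  simp

lemma aux_basis (L : (ℝ × ℝ) →L[ℝ] ℝ) (w : ℝ × ℝ) :
    L w = w.1 * L ((1:ℝ), (0:ℝ)) + w.2 * L ((0:ℝ), (1:ℝ)) := by
  have hw : w = w.1 • ((1:ℝ), (0:ℝ)) + w.2 • ((0:ℝ), (1:ℝ)) := by
    simp [Prod.ext_iff]
  nth_rewrite 1 [hw]
  simp only [map_add, map_smul, smul_eq_mul]

/-- Superposition rule for the Riccati-type system of PDEs
`∂v/∂x = a v² + b v + c`, `∂v/∂y = d v² + e v + f` on `ℝ²`: if `u, u₁, u₂, u₃`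
are four differentiable solutions and `(u − u₂)(u₁ − u₃)` vanishes nowhere,
then the cross-ratio `(u − u₁)(u₂ − u₃) / ((u − u₂)(u₁ − u₃))` is constant
on `ℝ²`. -/
theorem stmt_18 (a b c d e f : ℝ × ℝ → ℝ)
    (u u₁ u₂ u₃ : ℝ × ℝ → ℝ)
    (hu : Differentiable ℝ u) (hu₁ : Differentiable ℝ u₁)
    (hu₂ : Differentiable ℝ u₂) (hu₃ : Differentiable ℝ u₃)
    (hux : ∀ p : ℝ × ℝ,
      fderiv ℝ u p ((1 : ℝ), (0 : ℝ)) = a p * u p ^ 2 + b p * u p + c p)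
    (huy : ∀ p : ℝ × ℝ,
      fderiv ℝ u p ((0 : ℝ), (1 : ℝ)) = d p * u p ^ 2 + e p * u p + f p)
    (hu₁x : ∀ p : ℝ × ℝ,
      fderiv ℝ u₁ p ((1 : ℝ), (0 : ℝ)) = a p * u₁ p ^ 2 + b p * u₁ p + c p)
    (hu₁y : ∀ p : ℝ × ℝ,
      fderiv ℝ u₁ p ((0 : ℝ), (1 : ℝ)) = d p * u₁ p ^ 2 + e p * u₁ p + f p)
    (hu₂x : ∀ p : ℝ × ℝ,
      fderiv ℝ u₂ p ((1 : ℝ), (0 : ℝ)) = a p * u₂ p ^ 2 + b p * u₂ p + c p)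
    (hu₂y : ∀ p : ℝ × ℝ,
      fderiv ℝ u₂ p ((0 : ℝ), (1 : ℝ)) = d p * u₂ p ^ 2 + e p * u₂ p + f p)
    (hu₃x : ∀ p : ℝ × ℝ,
      fderiv ℝ u₃ p ((1 : ℝ), (0 : ℝ)) = a p * u₃ p ^ 2 + b p * u₃ p + c p)
    (hu₃y : ∀ p : ℝ × ℝ,
      fderiv ℝ u₃ p ((0 : ℝ), (1 : ℝ)) = d p * u₃ p ^ 2 + e p * u₃ p + f p)
    (hne : ∀ p : ℝ × ℝ, (u p - u₂ p) * (u₁ p - u₃ p) ≠ 0) :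
    ∀ p q : ℝ × ℝ,
      (u p - u₁ p) * (u₂ p - u₃ p) / ((u p - u₂ p) * (u₁ p - u₃ p))
        = (u q - u₁ q) * (u₂ q - u₃ q) / ((u q - u₂ q) * (u₁ q - u₃ q)) := by
  set N : ℝ × ℝ → ℝ := fun q => (u q - u₁ q) * (u₂ q - u₃ q) with hNdef
  set D : ℝ × ℝ → ℝ := fun q => (u q - u₂ q) * (u₁ q - u₃ q) with hDdef
  have hN : Differentiable ℝ N := (hu.sub hu₁).mul (hu₂.sub hu₃)
  have hD : Differentiable ℝ D := (hu.sub hu₂).mul (hu₁.sub hu₃)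
  have hNb : ∀ p w, fderiv ℝ N p w
      = (u p - u₁ p) * (fderiv ℝ u₂ p w - fderiv ℝ u₃ p w)
        + (u₂ p - u₃ p) * (fderiv ℝ u p w - fderiv ℝ u₁ p w) :=
    aux_mul_sub_fderiv u u₁ u₂ u₃ hu hu₁ hu₂ hu₃
  have hDb : ∀ p w, fderiv ℝ D p w
      = (u p - u₂ p) * (fderiv ℝ u₁ p w - fderiv ℝ u₃ p w)
        + (u₁ p - u₃ p) * (fderiv ℝ u p w - fderiv ℝ u₂ p w) :=
    aux_mul_sub_fderiv u u₂ u₁ u₃ hu hu₂ hu₁ hu₃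
  have hkey : ∀ p w, D p * fderiv ℝ N p w = N p * fderiv ℝ D p w := by
    intro p w
    rw [hNb, hDb, aux_basis (fderiv ℝ u p) w, aux_basis (fderiv ℝ u₁ p) w,
      aux_basis (fderiv ℝ u₂ p) w, aux_basis (fderiv ℝ u₃ p) w,
      hux p, huy p, hu₁x p, hu₁y p, hu₂x p, hu₂y p, hu₃x p, hu₃y p]
    simp only [hNdef, hDdef]
    ring
  have hzero : ∀ p, fderiv ℝ (fun q => N q * (D q)⁻¹) p = 0 := by
    intro p
    have hinv : HasFDerivAt (fun q => (D q)⁻¹)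
        ((ContinuousLinearMap.smulRight (1 : ℝ →L[ℝ] ℝ) (-(D p ^ 2)⁻¹)).comp
          (fderiv ℝ D p)) p :=
      (hasFDerivAt_inv (hne p)).comp p (hD p).hasFDerivAt
    have hmul : HasFDerivAt (fun q => N q * (D q)⁻¹)
        (N p • ((ContinuousLinearMap.smulRight (1 : ℝ →L[ℝ] ℝ) (-(D p ^ 2)⁻¹)).comp
          (fderiv ℝ D p)) + (D p)⁻¹ • fderiv ℝ N p) p :=
      (hN p).hasFDerivAt.mul hinv
    have heq : (N p • ((ContinuousLinearMap.smulRight (1 : ℝ →L[ℝ] ℝ) (-(D p ^ 2)⁻¹)).comp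
          (fderiv ℝ D p)) + (D p)⁻¹ • fderiv ℝ N p) = 0 := by
      apply ContinuousLinearMap.ext
      intro w
      have h := hkey p w
      have hD0 : D p ≠ 0 := hne p
      simp only [ContinuousLinearMap.add_apply, ContinuousLinearMap.smul_apply,
        ContinuousLinearMap.comp_apply, ContinuousLinearMap.smulRight_apply,
        ContinuousLinearMap.one_apply, ContinuousLinearMap.zero_apply, smul_eq_mul]
      field_simp
      linear_combination h
    rw [heq] at hmul
    exact hmul.fderiv
  have hF : Differentiable ℝ (fun q => N q * (D q)⁻¹) := hN.mul (hD.inv hne)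
  have hconst := is_const_of_fderiv_eq_zero hF hzero
  intro p q
  have := hconst p q
  simp only [div_eq_mul_inv]
  exact this
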